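/- For the ℓ-mode quantum oscillator Hamiltonian with frequencies ω_1,…,ω_ℓ, the function F̄_{ℓ,ω}(E) = ℓ ln((E+2E₀)/(ℓE_*)) + ℓ, with E_* = (∏_i ℏω_i)^{1/ℓ} and E₀ = ½∑_i ℏω_i, is an upper bound on the maximal entropy F̄(E) = sup{H(ρ) : Tr H_A ρ ≤ E + E₀} of states with mean energy at most E + E₀, and the function E ↦ F̄_{ℓ,ω}(E)/√E is nonincreasing on the region where F̄_{ℓ,ω} ≥ 0. -/

import Mathlib

open scoped ENNReal
open ContinuousLinearMap

noncomputable section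

/-- η(x) = −x ln x (with η(0) = 0, since Real.log 0 = 0). -/
def eta (x : ℝ) : ℝ := - x * Real.log x

/-- The binary entropy h₂(p) = η(p) + η(1−p). -/
def binEnt (p : ℝ) : ℝ := eta p + eta (1 - p)

/-- g(x) = (1+x) h₂(x/(1+x)). -/
def gAFW (x : ℝ) : ℝ := (1 + x) * binEnt (x / (1 + x))

/-- Extended Shannon entropy S({x_k}) = ∑_k η(x_k) − η(∑_k x_k), as a value in [0,∞]
(for nonnegative sequences with ∑ x_k ≤ 1 all the terms η(x_k) are nonnegative). -/
def shEntExt (x : ℕ → ℝ) : ℝ≥0∞ :=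
  (∑' k, ENNReal.ofReal (eta (x k))) - ENNReal.ofReal (eta (∑' k, x k))

variable {E F : Type*} [NormedAddCommGroup E] [InnerProductSpace ℂ E] [CompleteSpace E]
  [NormedAddCommGroup F] [InnerProductSpace ℂ F] [CompleteSpace F]

/-- The trace of a (positive) operator computed w.r.t. a Hilbert basis, with values in [0,∞].
For positive operators this is basis-independent and equals the trace. -/
def traceWith {ι : Type*} (b : HilbertBasis ι ℂ E) (T : E →L[ℂ] E) : ℝ≥0∞ :=
  ∑' i, ENNReal.ofReal ((inner ℂ (b i) (T (b i)) : ℂ)).re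

/-- The von Neumann entropy H(ρ) = Tr η(ρ), via the continuous functional calculus. -/
def vnEnt {ι : Type*} (b : HilbertBasis ι ℂ E) (ρ : E →L[ℂ] E) : ℝ≥0∞ :=
  traceWith b (cfc eta ρ)

/-- The homogeneous extension of the entropy, H(ρ) = Tr η(ρ) − η(Tr ρ),
for positive operators in the unit ball of the trace class. -/
def vnEntExt {ι : Type*} (b : HilbertBasis ι ℂ E) (ρ : E →L[ℂ] E) : ℝ≥0∞ :=
  vnEnt b ρ - ENNReal.ofReal (eta (traceWith b ρ).toReal)

/-- The rank-one operator |x⟩⟨y|. -/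
def rankOne (x y : E) : E →L[ℂ] E := (innerSL ℂ y).smulRight x

/-- A state (density operator): a positive operator of unit trace. -/
def IsState {ι : Type*} (b : HilbertBasis ι ℂ E) (ρ : E →L[ℂ] E) : Prop :=
  ρ.IsPositive ∧ traceWith b ρ = 1

/-- The mean energy Tr H_A ρ of a state ρ, for a Hamiltonian diagonal in the Hilbert basis b
with eigenvalues Ek (formula Tr H_A ρ = ∑_k E_k ⟨e_k, ρ e_k⟩, with values in [0,∞]). -/
def energyWith {ι : Type*} (b : HilbertBasis ι ℂ E) (Ek : ι → ℝ) (ρ : E →L[ℂ] E) : ℝ≥0∞ :=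
  ∑' k, ENNReal.ofReal (Ek k * ((inner ℂ (b k) (ρ (b k)) : ℂ)).re)

/-- F_{H_A}(E) = sup { H(ρ) : Tr H_A ρ ≤ E }, the maximal entropy of states with mean
energy not exceeding E. -/
def maxEntAt {ι : Type*} (b : HilbertBasis ι ℂ E) (Ek : ι → ℝ) (En : ℝ) : ℝ≥0∞ :=
  ⨆ ρ : {ρ : E →L[ℂ] E // IsState b ρ ∧ energyWith b Ek ρ ≤ ENNReal.ofReal En},
    vnEnt b ρ.1

lemma continuous_eta : Continuous eta := by
  have : eta = Real.negMulLog := rfl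
  rw [this]; exact Real.continuous_negMulLog

lemma eta_le_aux {p w : ℝ} (hp : 0 ≤ p) (hw : 0 < w) :
    eta p ≤ -Real.log w * p - p + w := by
  rcases eq_or_lt_of_le hp with h | h
  · simp [eta, ← h]; positivity
  · have h1 : Real.log (w / p) ≤ w / p - 1 := Real.log_le_sub_one_of_pos (by positivity)
    have h2 : Real.log (w / p) = Real.log w - Real.log p := Real.log_div (ne_of_gt hw) (ne_of_gt h)
    have h3 : p * Real.log (w / p) ≤ p * (w / p - 1) := by nlinarith
    rw [h2] at h3
    have h4 : p * (w / p - 1) = w - p := by field_simp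
    simp only [eta]; nlinarith

lemma eta_nonneg {p : ℝ} (h0 : 0 ≤ p) (h1 : p ≤ 1) : 0 ≤ eta p := by
  have : Real.log p ≤ 0 := Real.log_nonpos h0 h1
  simp only [eta]; nlinarith

lemma sinh_aux {x : ℝ} (hx : 0 ≤ x) : x * Real.exp (-(x/2)) + Real.exp (-x) ≤ 1 := by
  have key : ∀ t : ℝ, 0 ≤ t → t ≤ Real.sinh t := by
    intro t ht
    have hmono : Monotone (fun t => Real.sinh t - t) := by
      have hd : ∀ y : ℝ, HasDerivAt (fun t => Real.sinh t - t) (Real.cosh y - 1) y :=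
        fun y => (Real.hasDerivAt_sinh y).sub (hasDerivAt_id y)
      apply monotone_of_deriv_nonneg
      · exact fun y => (hd y).differentiableAt
      · intro y
        rw [(hd y).deriv]
        simp [Real.one_le_cosh]
    have := hmono ht
    simpa using this
  have h2 := key (x/2) (by linarith)
  rw [Real.sinh_eq] at h2
  -- x/2 ≤ (exp(x/2) - exp(-(x/2)))/2, so x ≤ exp(x/2) - exp(-(x/2))
  have h3 : x ≤ Real.exp (x/2) - Real.exp (-(x/2)) := by linarith
  have h4 : Real.exp (-(x/2)) * Real.exp (x/2) = 1 := by
    rw [← Real.exp_add]; simp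
  have h5 : Real.exp (-(x/2)) * Real.exp (-(x/2)) = Real.exp (-x) := by
    rw [← Real.exp_add]; ring_nf
  nlinarith [Real.exp_pos (-(x/2)), mul_le_mul_of_nonneg_left h3 (Real.exp_nonneg (-(x/2)))]

lemma tsum_pi_geom {L : ℕ} (r : Fin L → ℝ≥0∞) :
    ∑' (n : Fin L → ℕ), ∏ i, r i ^ n i = ∏ i, (1 - r i)⁻¹ := by
  induction L with
  | zero =>
    simp only [Finset.univ_eq_empty, Finset.prod_empty]
    rw [tsum_eq_single (fun i => i.elim0) (by intro b hb; exact absurd (funext fun i => i.elim0) hb)]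
  | succ L ih =>
    rw [← (Fin.consEquiv (fun _ : Fin (L+1) => ℕ)).tsum_eq]
    have : ∀ p : ℕ × (Fin L → ℕ),
        (∏ i, r i ^ (Fin.consEquiv (fun _ : Fin (L+1) => ℕ)) p i)
          = r 0 ^ p.1 * ∏ i : Fin L, r i.succ ^ p.2 i := by
      intro p
      rw [Fin.prod_univ_succ]
      simp [Fin.consEquiv]
    rw [tsum_congr this, ENNReal.tsum_prod']
    simp only
    calc ∑' (a : ℕ) (b : Fin L → ℕ), r 0 ^ a * ∏ i : Fin L, r i.succ ^ b i
        = ∑' (a : ℕ), r 0 ^ a * ∑' (b : Fin L → ℕ), ∏ i : Fin L, r i.succ ^ b i := by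
          congr 1; funext a; rw [ENNReal.tsum_mul_left]
      _ = (∑' (a : ℕ), r 0 ^ a) * ∑' (b : Fin L → ℕ), ∏ i : Fin L, r i.succ ^ b i := by
          rw [ENNReal.tsum_mul_right]
      _ = (1 - r 0)⁻¹ * ∏ i : Fin L, (1 - r i.succ)⁻¹ := by rw [ENNReal.tsum_geometric, ih]
      _ = ∏ i, (1 - r i)⁻¹ := (Fin.prod_univ_succ fun i => (1 - r i)⁻¹).symm



lemma inner_affine_apply (ρ : E →L[ℂ] E) (x : E) (a c : ℝ) (hx : inner ℂ x x = (1:ℂ)) :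
    (inner ℂ x ((a • ρ + c • 1) x) : ℂ).re = a * (inner ℂ x (ρ x) : ℂ).re + c := by
  have h1 : ∀ (b : ℝ) (y z : E), (inner ℂ y (b • z) : ℂ) = (b:ℂ) * inner ℂ y z := by
    intro b y z
    rw [show b • z = (b:ℂ) • z from rfl, inner_smul_right]
  simp [inner_add_right, h1, hx, Complex.mul_re]
  have hn : ‖x‖ ^ 2 = 1 := by
    rw [inner_self_eq_norm_sq_to_K, ← RCLike.ofReal_pow, ← RCLike.ofReal_one, RCLike.ofReal_inj] at hx; exact hx
  simp [← Complex.ofReal_pow, hn]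

lemma inner_cfc_eta_le (ρ : E →L[ℂ] E) (hρ : ρ.IsPositive) (x : E)
    (hx : (inner ℂ x x : ℂ) = 1) :
    ENNReal.ofReal ((inner ℂ x (cfc eta ρ x) : ℂ)).re ≤
      ENNReal.ofReal (eta ((inner ℂ x (ρ x) : ℂ)).re) := by
  have hsa : IsSelfAdjoint ρ := hρ.isSelfAdjoint
  set p : ℝ := ((inner ℂ x (ρ x) : ℂ)).re with hpdef
  have hp : 0 ≤ p := hρ.re_inner_nonneg_right x
  have key : ∀ ε : ℝ, 0 < ε →
      ((inner ℂ x (cfc eta ρ x) : ℂ)).re ≤ (-Real.log ε - 1) * p + ε := by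
    intro ε hε
    have hmono : cfc eta ρ ≤ cfc (fun t => (-Real.log ε - 1) * t + ε) ρ := by
      apply cfc_mono
      · intro t ht
        have ht0 : 0 ≤ t := spectrum_nonneg_of_nonneg ((nonneg_iff_isPositive ρ).mpr hρ) ht
        have h := eta_le_aux ht0 hε
        nlinarith
      · exact continuous_eta.continuousOn
      · exact ((continuous_const.mul continuous_id).add continuous_const).continuousOn
    have heq : cfc (fun t => (-Real.log ε - 1) * t + ε) ρ = (-Real.log ε - 1) • ρ + ε • 1 := by
      rw [cfc_add ρ (fun t => (-Real.log ε - 1) * t) (fun _ => ε),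
        cfc_const_mul (-Real.log ε - 1) (fun t : ℝ => t) ρ,
        cfc_id' ℝ ρ, cfc_const ε ρ, Algebra.algebraMap_eq_smul_one]
    rw [heq] at hmono
    have hle : ((inner ℂ x (cfc eta ρ x) : ℂ)).re ≤
        ((inner ℂ x ((( -Real.log ε - 1) • ρ + ε • 1) x) : ℂ)).re := by
      have h2 := ((le_def _ _).mp hmono).re_inner_nonneg_right x
      simp only [sub_apply, inner_sub_right, map_sub, RCLike.re_to_complex] at h2
      linarith
    rw [inner_affine_apply ρ x _ _ hx] at hle
    linarith
  rcases eq_or_lt_of_le hp with h0 | h0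
  · have hnp : ((inner ℂ x (cfc eta ρ x) : ℂ)).re ≤ 0 := by
      apply le_of_forall_pos_le_add
      intro ε hε
      have := key ε hε
      rw [← h0] at this
      simpa using this
    calc ENNReal.ofReal ((inner ℂ x (cfc eta ρ x) : ℂ)).re = 0 := ENNReal.ofReal_of_nonpos hnp
      _ ≤ _ := zero_le
  · apply ENNReal.ofReal_le_ofReal
    have := key p h0
    have heta : (-Real.log p - 1) * p + p = eta p := by simp only [eta]; ring
    linarith [heta ▸ this]

lemma classical_bound {L : ℕ} (hL : 0 < L) (c : Fin L → ℝ) (hc : ∀ i, 0 < c i)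
    (p : (Fin L → ℕ) → ℝ) (hp : ∀ k, 0 ≤ p k) (htr : ∑' k, ENNReal.ofReal (p k) = 1)
    (Et : ℝ) (hEt : 0 < Et)
    (hen : ∑' (n : Fin L → ℕ), ENNReal.ofReal
        (((1:ℝ)/2 * ∑ i, c i + ∑ i, (n i : ℝ) * c i) * p n) ≤ ENNReal.ofReal Et) :
    ∑' k, ENNReal.ofReal (eta (p k)) ≤
      ENNReal.ofReal ((L:ℝ) * Real.log Et - L * Real.log L - Real.log (∏ i, c i) + L) := by
  have hL0 : (0:ℝ) < L := Nat.cast_pos.mpr hL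
  set Ek : (Fin L → ℕ) → ℝ := fun n => (1:ℝ)/2 * ∑ i, c i + ∑ i, (n i : ℝ) * c i with hEk
  set β : ℝ := L / Et with hβdef
  have hβ : 0 < β := by positivity
  set E0 : ℝ := (1:ℝ)/2 * ∑ i, c i with hE0
  have hE0pos : 0 < E0 := by
    rw [hE0]; have : 0 < ∑ i, c i := Finset.sum_pos (fun i _ => hc i) ⟨⟨0, hL⟩, Finset.mem_univ _⟩
    linarith
  set Z₀ : ℝ := ∏ i, (β * c i)⁻¹ with hZ₀def
  have hZ₀ : 0 < Z₀ := Finset.prod_pos fun i _ => inv_pos.mpr (mul_pos hβ (hc i))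
  set w : (Fin L → ℕ) → ℝ := fun k => Real.exp (-(β * Ek k)) * Z₀⁻¹ with hwdef
  have hwpos : ∀ k, 0 < w k := fun k => mul_pos (Real.exp_pos _) (inv_pos.mpr hZ₀)
  set r : Fin L → ℝ≥0∞ := fun i => ENNReal.ofReal (Real.exp (-(β * c i))) with hrdef
  -- partition function bound
  have hterm : ∀ n : Fin L → ℕ, ENNReal.ofReal (Real.exp (-(β * Ek n))) =
      ENNReal.ofReal (Real.exp (-(β * E0))) * ∏ i, (r i) ^ (n i) := by
    intro n
    have e1 : -(β * Ek n) = -(β * E0) + ∑ i, (n i : ℝ) * (-(β * c i)) := by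
      have : ∑ i, (n i : ℝ) * (-(β * c i)) = (-β) * ∑ i, (n i : ℝ) * c i := by
        rw [Finset.mul_sum]; exact Finset.sum_congr rfl fun i _ => by ring
      rw [this, hEk, hE0]; ring
    rw [e1, Real.exp_add, Real.exp_sum, ENNReal.ofReal_mul (Real.exp_nonneg _),
      ENNReal.ofReal_prod_of_nonneg (fun i _ => Real.exp_nonneg _)]
    congr 1
    exact Finset.prod_congr rfl fun i _ => by
      rw [Real.exp_nat_mul, ENNReal.ofReal_pow (Real.exp_nonneg _)]
  have hri : ∀ i : Fin L, (1 - r i)⁻¹ ≤ ENNReal.ofReal ((β * c i)⁻¹ * Real.exp (β * c i / 2)) := by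
    intro i
    set x : ℝ := β * c i with hxdef
    have hx : 0 < x := mul_pos hβ (hc i)
    have h1 : ENNReal.ofReal (x * Real.exp (-(x/2))) ≤ 1 - r i := by
      apply ENNReal.le_sub_of_add_le_right ENNReal.ofReal_ne_top
      have hgoal : ENNReal.ofReal (x * Real.exp (-(x/2)))
          + ENNReal.ofReal (Real.exp (-(β * c i))) ≤ 1 := by
        rw [← ENNReal.ofReal_add (mul_nonneg hx.le (Real.exp_nonneg _)) (Real.exp_nonneg _),
          ← ENNReal.ofReal_one]
        apply ENNReal.ofReal_le_ofReal
        have h := sinh_aux hx.le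
        rw [← hxdef]
        exact h
      exact hgoal
    have h2 := ENNReal.inv_le_inv' h1
    rw [← ENNReal.ofReal_inv_of_pos (mul_pos hx (Real.exp_pos _))] at h2
    refine h2.trans_eq ?_
    congr 1
    rw [mul_inv, ← Real.exp_neg, neg_neg]
  have Zle : ∑' (n : Fin L → ℕ), ENNReal.ofReal (Real.exp (-(β * Ek n))) ≤ ENNReal.ofReal Z₀ := by
    calc ∑' (n : Fin L → ℕ), ENNReal.ofReal (Real.exp (-(β * Ek n)))
        = ENNReal.ofReal (Real.exp (-(β * E0))) * ∑' (n : Fin L → ℕ), ∏ i, (r i) ^ (n i) := by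
          rw [tsum_congr hterm, ENNReal.tsum_mul_left]
      _ = ENNReal.ofReal (Real.exp (-(β * E0))) * ∏ i, (1 - r i)⁻¹ := by rw [tsum_pi_geom]
      _ ≤ ENNReal.ofReal (Real.exp (-(β * E0))) *
            ∏ i, ENNReal.ofReal ((β * c i)⁻¹ * Real.exp (β * c i / 2)) :=
          mul_le_mul_right (Finset.prod_le_prod' fun i _ => hri i) _
      _ = ENNReal.ofReal Z₀ := by
          rw [← ENNReal.ofReal_prod_of_nonneg (fun i _ => le_of_lt (mul_pos (inv_pos.mpr (mul_pos hβ (hc i))) (Real.exp_pos _))),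
            ← ENNReal.ofReal_mul (Real.exp_nonneg _)]
          congr 1
          rw [Finset.prod_mul_distrib, ← Real.exp_sum]
          have hs : ∑ i, β * c i / 2 = β * E0 := by
            rw [← Finset.sum_div, ← Finset.mul_sum, hE0]; ring
          rw [hs, show Real.exp (-(β * E0)) * ((∏ x : Fin L, (β * c x)⁻¹) * Real.exp (β * E0))
            = (Real.exp (-(β * E0)) * Real.exp (β * E0)) * ∏ x : Fin L, (β * c x)⁻¹ from by ring,
            ← Real.exp_add, neg_add_cancel, Real.exp_zero, one_mul]
  have Wle : ∑' k, ENNReal.ofReal (w k) ≤ 1 := by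
    calc ∑' k, ENNReal.ofReal (w k)
        = (∑' (k : Fin L → ℕ), ENNReal.ofReal (Real.exp (-(β * Ek k)))) * ENNReal.ofReal Z₀⁻¹ := by
          rw [← ENNReal.tsum_mul_right]; exact tsum_congr fun k => ENNReal.ofReal_mul (Real.exp_nonneg _)
      _ ≤ ENNReal.ofReal Z₀ * ENNReal.ofReal Z₀⁻¹ := mul_le_mul_left Zle _
      _ = 1 := by rw [← ENNReal.ofReal_mul hZ₀.le, mul_inv_cancel₀ hZ₀.ne', ENNReal.ofReal_one]
  -- pointwise entropy bound
  set M : ℝ := max 0 (Real.log Z₀) with hMdef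
  set m : ℝ := max 0 (-Real.log Z₀) with hmdef
  have hM0 : 0 ≤ M := le_max_left _ _
  have hm0 : 0 ≤ m := le_max_left _ _
  have hMm : M - m = Real.log Z₀ := by
    rcases le_total 0 (Real.log Z₀) with h | h
    · rw [hMdef, hmdef, max_eq_right h, max_eq_left (by linarith)]; ring
    · rw [hMdef, hmdef, max_eq_left h, max_eq_right (by linarith)]; ring
  have hp1 : ∀ k, p k ≤ 1 := by
    intro k
    have h := ENNReal.le_tsum (f := fun k => ENNReal.ofReal (p k)) k
    rw [htr] at h
    exact ENNReal.ofReal_le_one.mp h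
  have perk : ∀ k, ENNReal.ofReal (eta (p k)) + ENNReal.ofReal (p k) + ENNReal.ofReal (m * p k) ≤
      ENNReal.ofReal β * ENNReal.ofReal (Ek k * p k) + ENNReal.ofReal (M * p k)
        + ENNReal.ofReal (w k) := by
    intro k
    have hlogw : Real.log (w k) = -(β * Ek k) - Real.log Z₀ := by
      rw [hwdef]
      rw [Real.log_mul (Real.exp_ne_zero _) (inv_ne_zero hZ₀.ne'), Real.log_exp, Real.log_inv]
      ring
    have hbase := eta_le_aux (hp k) (hwpos k)
    have hexp : -Real.log (w k) * p k = β * (Ek k * p k) + M * p k - m * p k := by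
      rw [hlogw, ← hMm]; ring
    have hre : eta (p k) + p k + m * p k ≤ β * (Ek k * p k) + M * p k + w k := by
      rw [hexp] at hbase; linarith
    calc ENNReal.ofReal (eta (p k)) + ENNReal.ofReal (p k) + ENNReal.ofReal (m * p k)
        = ENNReal.ofReal (eta (p k) + p k + m * p k) := by
          rw [ENNReal.ofReal_add (add_nonneg (eta_nonneg (hp k) (hp1 k)) (hp k))
            (mul_nonneg hm0 (hp k)), ENNReal.ofReal_add (eta_nonneg (hp k) (hp1 k)) (hp k)]
      _ ≤ ENNReal.ofReal (β * (Ek k * p k) + M * p k + w k) := ENNReal.ofReal_le_ofReal hre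
      _ ≤ ENNReal.ofReal (β * (Ek k * p k) + M * p k) + ENNReal.ofReal (w k) :=
          ENNReal.ofReal_add_le
      _ ≤ ENNReal.ofReal (β * (Ek k * p k)) + ENNReal.ofReal (M * p k) + ENNReal.ofReal (w k) :=
          add_le_add_left ENNReal.ofReal_add_le _
      _ = ENNReal.ofReal β * ENNReal.ofReal (Ek k * p k) + ENNReal.ofReal (M * p k)
            + ENNReal.ofReal (w k) := by rw [ENNReal.ofReal_mul hβ.le]
  have hsum := ENNReal.tsum_le_tsum perk
  rw [ENNReal.tsum_add, ENNReal.tsum_add, ENNReal.tsum_add, ENNReal.tsum_add] at hsum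
  have hm_tsum : ∑' k, ENNReal.ofReal (m * p k) = ENNReal.ofReal m := by
    rw [tsum_congr (fun k => ENNReal.ofReal_mul hm0), ENNReal.tsum_mul_left, htr, mul_one]
  have hM_tsum : ∑' k, ENNReal.ofReal (M * p k) = ENNReal.ofReal M := by
    rw [tsum_congr (fun k => ENNReal.ofReal_mul hM0), ENNReal.tsum_mul_left, htr, mul_one]
  have hβ_tsum : ∑' k, ENNReal.ofReal β * ENNReal.ofReal (Ek k * p k) ≤ ENNReal.ofReal (L:ℝ) := by
    rw [ENNReal.tsum_mul_left]
    calc ENNReal.ofReal β * ∑' (k : Fin L → ℕ), ENNReal.ofReal (Ek k * p k)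
        ≤ ENNReal.ofReal β * ENNReal.ofReal Et := mul_le_mul_right hen _
      _ = ENNReal.ofReal (β * Et) := (ENNReal.ofReal_mul hβ.le).symm
      _ = ENNReal.ofReal (L:ℝ) := by rw [hβdef, div_mul_cancel₀ _ hEt.ne']
  rw [htr, hm_tsum, hM_tsum] at hsum
  have h5 : (∑' k, ENNReal.ofReal (eta (p k))) + 1 + ENNReal.ofReal m ≤
      ENNReal.ofReal (L:ℝ) + ENNReal.ofReal M + 1 :=
    hsum.trans (add_le_add (add_le_add_left hβ_tsum _) Wle)
  have hsum2 : (∑' k, ENNReal.ofReal (eta (p k))) + ENNReal.ofReal (1 + m) ≤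
      ENNReal.ofReal ((L:ℝ) + M + 1) := by
    calc (∑' k, ENNReal.ofReal (eta (p k))) + ENNReal.ofReal (1 + m)
        = (∑' k, ENNReal.ofReal (eta (p k))) + 1 + ENNReal.ofReal m := by
          rw [ENNReal.ofReal_add zero_le_one hm0, ENNReal.ofReal_one, add_assoc]
      _ ≤ ENNReal.ofReal (L:ℝ) + ENNReal.ofReal M + 1 := h5
      _ = ENNReal.ofReal ((L:ℝ) + M + 1) := by
          rw [ENNReal.ofReal_add (add_nonneg hL0.le hM0) zero_le_one,
            ENNReal.ofReal_add hL0.le hM0, ENNReal.ofReal_one]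
  have hfin : (∑' k, ENNReal.ofReal (eta (p k))) ≤ ENNReal.ofReal ((L:ℝ) + M + 1 - (1 + m)) := by
    rw [ENNReal.ofReal_sub _ (add_nonneg zero_le_one hm0)]
    exact ENNReal.le_sub_of_add_le_right ENNReal.ofReal_ne_top hsum2
  refine hfin.trans (ENNReal.ofReal_le_ofReal ?_)
  -- (L + M + 1) - (1 + m) = L + log Z₀ ≤ L log Et - L log L - log P + L
  have hlogZ : Real.log Z₀ = -(L * Real.log β) - Real.log (∏ i, c i) := by
    rw [hZ₀def, Real.log_prod (fun i _ => (inv_pos.mpr (mul_pos hβ (hc i))).ne')]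
    have : ∀ i : Fin L, Real.log (β * c i)⁻¹ = -(Real.log β + Real.log (c i)) := by
      intro i; rw [Real.log_inv, Real.log_mul hβ.ne' (hc i).ne']
    rw [Finset.sum_congr rfl fun i _ => this i, Finset.sum_neg_distrib,
      Finset.sum_add_distrib, Finset.sum_const, Finset.card_univ, Fintype.card_fin,
      Real.log_prod (fun i _ => (hc i).ne')]
    simp only [nsmul_eq_mul]
    ring
  have hlogβ : Real.log β = Real.log L - Real.log Et := by
    rw [hβdef, Real.log_div (by positivity) hEt.ne']
  have : M - m = Real.log Z₀ := hMm
  rw [hlogZ, hlogβ] at this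
  linarith [this]


lemma antitone_part {l : ℕ} (hl : 0 < l) {S c : ℝ} (hS : 0 < S) (hc : 0 < c) (hcS : c ≤ S) :
    AntitoneOn (fun En => ((l:ℝ) * Real.log ((En + S) / c) + l) / Real.sqrt En)
      (Set.Ioi (0:ℝ)) := by
  have hl0 : (0:ℝ) < l := Nat.cast_pos.mpr hl
  have hder : ∀ x ∈ Set.Ioi (0:ℝ),
      HasDerivAt (fun En => ((l:ℝ) * Real.log ((En + S) / c) + l) / Real.sqrt En)
        ((((l:ℝ) * ((1/c) / ((x + S) / c))) * Real.sqrt x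
          - ((l:ℝ) * Real.log ((x + S) / c) + l) * (1 / (2 * Real.sqrt x))) / Real.sqrt x ^ 2)
        x := by
    intro x hx
    have hx0 : (0:ℝ) < x := hx
    have hxS : 0 < x + S := by linarith
    have h1 : HasDerivAt (fun E : ℝ => (E + S) / c) (1/c) x := by
      simpa using ((hasDerivAt_id x).add_const S).div_const c
    have h2 : HasDerivAt (fun E : ℝ => Real.log ((E + S) / c)) ((1/c) / ((x + S) / c)) x :=
      h1.log (by positivity)
    have h3 : HasDerivAt (fun E : ℝ => (l:ℝ) * Real.log ((E + S) / c) + l)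
        ((l:ℝ) * ((1/c) / ((x + S) / c))) x := (h2.const_mul _).add_const _
    have h4 : HasDerivAt Real.sqrt (1 / (2 * Real.sqrt x)) x := Real.hasDerivAt_sqrt hx0.ne'
    exact h3.div h4 (Real.sqrt_pos.mpr hx0).ne'
  apply antitoneOn_of_deriv_nonpos (convex_Ioi 0)
  · exact fun x hx => (hder x hx).continuousAt.continuousWithinAt
  · rw [interior_Ioi]
    exact fun x hx => (hder x hx).differentiableAt.differentiableWithinAt
  · rw [interior_Ioi]
    intro x hx
    rw [(hder x hx).deriv]
    have hx0 : (0:ℝ) < x := hx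
    have hxS : 0 < x + S := by linarith
    have hsx : 0 < Real.sqrt x := Real.sqrt_pos.mpr hx0
    apply div_nonpos_of_nonpos_of_nonneg _ (sq_nonneg _)
    have hd1 : (1/c) / ((x + S) / c) = 1 / (x + S) := by field_simp
    rw [hd1]
    have hlog : x / (x + S) ≤ Real.log ((x + S) / c) := by
      have k1 : Real.log (S / (x + S)) ≤ S / (x + S) - 1 :=
        Real.log_le_sub_one_of_pos (by positivity)
      have k2 : Real.log ((x + S) / S) = - Real.log (S / (x + S)) := by
        rw [← Real.log_inv]
        congr 1
        field_simp
      have k3 : Real.log ((x + S) / S) ≤ Real.log ((x + S) / c) := by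
        have : (x + S) / S ≤ (x + S) / c := by gcongr
        exact (Real.log_le_log_iff (by positivity) (by positivity)).mpr this
      have k4 : S / (x + S) - 1 = -(x / (x + S)) := by field_simp; ring
      rw [k4] at k1
      linarith
    have key : (l:ℝ) * (1 / (x + S)) * Real.sqrt x ≤
        ((l:ℝ) * Real.log ((x + S) / c) + l) * (1 / (2 * Real.sqrt x)) := by
      have hms : Real.sqrt x * Real.sqrt x = x := Real.mul_self_sqrt hx0.le
      rw [mul_one_div, mul_one_div, le_div_iff₀ (by positivity)]
      have expand : (l:ℝ) / (x + S) * Real.sqrt x * (2 * Real.sqrt x)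
          = 2 * (Real.sqrt x * Real.sqrt x) * l / (x + S) := by ring
      rw [expand, hms, div_le_iff₀ hxS]
      have hq : (l:ℝ) * x ≤ (l:ℝ) * Real.log ((x + S) / c) * (x + S) := by
        have h1 := mul_le_mul_of_nonneg_right hlog hxS.le
        have h2 : x / (x + S) * (x + S) = x := by field_simp
        rw [h2] at h1
        calc (l:ℝ) * x ≤ (l:ℝ) * (Real.log ((x + S) / c) * (x + S)) :=
              mul_le_mul_of_nonneg_left h1 hl0.le
          _ = _ := by ring
      nlinarith [hq, mul_pos hl0 hS]
    linarith

/-- for the ℓ-mode quantum oscillator with frequencies ω_i (Hamiltonian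
diagonal in a Hilbert basis indexed by multi-indices n : Fin ℓ → ℕ, with eigenvalues
E₀ + ∑_i n_i ℏω_i), the function F̄_{ℓ,ω}(E) = ℓ ln((E+2E₀)/(ℓE_*)) + ℓ with
E_* = (∏_i ℏω_i)^{1/ℓ} is an upper bound on the maximal entropy F̄(E) of states with mean
energy at most E + E₀, and E ↦ F̄_{ℓ,ω}(E)/√E is nonincreasing where F̄_{ℓ,ω} ≥ 0. -/
theorem oscillator_entropy_upper_bound {A : Type*} [NormedAddCommGroup A]
    [InnerProductSpace ℂ A] [CompleteSpace A] {ℓ : ℕ} (hl : 0 < ℓ)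
    (b : HilbertBasis (Fin ℓ → ℕ) ℂ A)
    (hbar : ℝ) (hhbar : 0 < hbar) (ω : Fin ℓ → ℝ) (hω : ∀ i, 0 < ω i) :
    (∀ En : ℝ, 0 ≤ En →
      maxEntAt b
        (fun n : Fin ℓ → ℕ =>
          (1 / 2) * ∑ i, hbar * ω i + ∑ i, (n i : ℝ) * (hbar * ω i))
        (En + (1 / 2) * ∑ i, hbar * ω i) ≤
      ENNReal.ofReal ((ℓ : ℝ) *
        Real.log ((En + ∑ i, hbar * ω i) / (ℓ * (∏ i, hbar * ω i) ^ ((1 : ℝ) / ℓ))) + ℓ)) ∧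
    AntitoneOn
      (fun En => ((ℓ : ℝ) *
        Real.log ((En + ∑ i, hbar * ω i) / (ℓ * (∏ i, hbar * ω i) ^ ((1 : ℝ) / ℓ))) + ℓ) /
        Real.sqrt En)
      {En : ℝ | 0 < En ∧ 0 ≤ (ℓ : ℝ) *
        Real.log ((En + ∑ i, hbar * ω i) / (ℓ * (∏ i, hbar * ω i) ^ ((1 : ℝ) / ℓ))) + ℓ} := by
  have hc : ∀ i, 0 < hbar * ω i := fun i => mul_pos hhbar (hω i)
  have hl0 : (0:ℝ) < ℓ := Nat.cast_pos.mpr hl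
  have hS : 0 < ∑ i, hbar * ω i :=
    Finset.sum_pos (fun i _ => hc i) ⟨⟨0, hl⟩, Finset.mem_univ _⟩
  have hP : 0 < ∏ i, hbar * ω i := Finset.prod_pos fun i _ => hc i
  have hEstar : 0 < (∏ i, hbar * ω i) ^ ((1:ℝ)/ℓ) := Real.rpow_pos_of_pos hP _
  have hAMGM : (ℓ:ℝ) * (∏ i, hbar * ω i) ^ ((1:ℝ)/ℓ) ≤ ∑ i, hbar * ω i := by
    have h1 := Real.geom_mean_le_arith_mean_weighted Finset.univ (fun _ => 1/(ℓ:ℝ))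
        (fun i => hbar * ω i) (fun i _ => by positivity)
        (by rw [Finset.sum_const, Finset.card_univ, Fintype.card_fin, nsmul_eq_mul]; field_simp)
        (fun i _ => (hc i).le)
    rw [Real.finset_prod_rpow _ _ (fun i _ => (hc i).le) _] at h1
    have h2 : ∑ i, (1/(ℓ:ℝ)) * (hbar * ω i) = (1/(ℓ:ℝ)) * ∑ i, hbar * ω i := by
      rw [Finset.mul_sum]
    rw [h2] at h1
    calc (ℓ:ℝ) * (∏ i, hbar * ω i) ^ ((1:ℝ)/ℓ)
        ≤ (ℓ:ℝ) * ((1/(ℓ:ℝ)) * ∑ i, hbar * ω i) := mul_le_mul_of_nonneg_left h1 hl0.le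
      _ = ∑ i, hbar * ω i := by field_simp
  constructor
  · intro En hEn
    apply iSup_le
    rintro ⟨ρ, ⟨⟨hpos, htr⟩, hen⟩⟩
    have horth : ∀ k : Fin ℓ → ℕ, (inner ℂ (b k) (b k) : ℂ) = 1 := by
      intro k
      rw [inner_self_eq_norm_sq_to_K, b.orthonormal.1 k]
      norm_num
    have step1 : vnEnt b ρ ≤
        ∑' k : Fin ℓ → ℕ, ENNReal.ofReal (eta ((inner ℂ (b k) (ρ (b k)) : ℂ).re)) :=
      ENNReal.tsum_le_tsum fun k => inner_cfc_eta_le ρ hpos (b k) (horth k)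
    unfold traceWith at htr
    unfold energyWith at hen
    have hEt : 0 < En + 1/2 * ∑ i, hbar * ω i := by linarith
    have step2 := classical_bound hl (fun i => hbar * ω i) hc
        (fun k => (inner ℂ (b k) (ρ (b k)) : ℂ).re) (fun k => hpos.re_inner_nonneg_right (b k)) htr
        (En + 1/2 * ∑ i, hbar * ω i) hEt hen
    refine step1.trans (step2.trans (ENNReal.ofReal_le_ofReal ?_))
    have hEnS : 0 < En + ∑ i, hbar * ω i := by linarith
    rw [Real.log_div hEnS.ne' (by positivity), Real.log_mul hl0.ne' hEstar.ne',
      Real.log_rpow hP]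
    have hcast : (ℓ:ℝ) * ((1:ℝ)/ℓ * Real.log (∏ i, hbar * ω i)) = Real.log (∏ i, hbar * ω i) := by
      field_simp
    have hlogle : Real.log (En + 1/2 * ∑ i, hbar * ω i) ≤ Real.log (En + ∑ i, hbar * ω i) :=
      (Real.log_le_log_iff hEt hEnS).mpr (by linarith)
    nlinarith [mul_le_mul_of_nonneg_left hlogle hl0.le, hcast]
  · have hset : {En : ℝ | 0 < En ∧ 0 ≤ (ℓ : ℝ) *
        Real.log ((En + ∑ i, hbar * ω i) / (ℓ * (∏ i, hbar * ω i) ^ ((1 : ℝ) / ℓ))) + ℓ}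
        = Set.Ioi (0:ℝ) := by
      ext x
      simp only [Set.mem_setOf_eq, Set.mem_Ioi]
      constructor
      · exact fun h => h.1
      · intro hx
        refine ⟨hx, ?_⟩
        have h1 : (1:ℝ) ≤ (x + ∑ i, hbar * ω i) /
            ((ℓ:ℝ) * (∏ i, hbar * ω i) ^ ((1:ℝ)/ℓ)) := by
          rw [le_div_iff₀ (by positivity)]
          linarith [hAMGM]
        have h2 := Real.log_nonneg h1
        nlinarith [mul_nonneg hl0.le h2]
    rw [hset]
    exact antitone_part hl hS (by positivity) hAMGM
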